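/- arXiv:2008.01760 — 2 statements merged into one kernel-verified Lean document; each statement's English description precedes it below -/
import Mathlib

section
/- Let $D_1,\dots,D_p > 0$ and $\lambda \ge 0$. The minimizer of $g(w) = \sum_{l=1}^p (w_l^2 + \lambda w_l) D_l$ over the simplex $\{w \in \mathbb{R}^p : w_l \ge 0, \sum_l w_l = 1\}$ is given componentwise by $w_l^* = \frac{1}{2}\max(\alpha^*/D_l - \lambda, 0)$, where $\alpha^* > 0$ is the unique solution of $\sum_{l=1}^p \frac{1}{2}\max(\alpha/D_l - \lambda, 0) = 1$. -/
/-- The minimizer of `g(w) = ∑ (w_l² + λ w_l) D_l` over the probability simplex is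
`w_l* = (1/2) max(α*/D_l - λ, 0)` where `α* > 0` uniquely solves
`∑ (1/2) max(α/D_l - λ, 0) = 1`. -/
theorem stmt_0 {p : ℕ} (D : Fin p → ℝ) (hD : ∀ l, 0 < D l) (lam : ℝ) (hlam : 0 ≤ lam)
    (αs : ℝ) (hαs : 0 < αs)
    (hroot : ∑ l, (1 / 2) * max (αs / D l - lam) 0 = 1)
    (huniq : ∀ α : ℝ, 0 < α → (∑ l, (1 / 2) * max (α / D l - lam) 0 = 1) → α = αs) :
    (∀ l, 0 ≤ (1 / 2) * max (αs / D l - lam) 0) ∧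
    (∑ l, (1 / 2) * max (αs / D l - lam) 0 = 1) ∧
    (∀ w : Fin p → ℝ, (∀ l, 0 ≤ w l) → (∑ l, w l = 1) →
      ∑ l, (((1 / 2) * max (αs / D l - lam) 0) ^ 2
              + lam * ((1 / 2) * max (αs / D l - lam) 0)) * D l
        ≤ ∑ l, ((w l) ^ 2 + lam * w l) * D l) := by
  set v : Fin p → ℝ := fun l => (1 / 2) * max (αs / D l - lam) 0 with hv
  refine ⟨fun l => by positivity, hroot, ?_⟩
  intro w hw hsum
  have key : ∀ l, (v l ^ 2 + lam * v l) * D l + αs * (w l - v l)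
      ≤ ((w l) ^ 2 + lam * w l) * D l := by
    intro l
    have hDl := hD l
    rcases le_or_gt (αs / D l - lam) 0 with h | h
    · have hv0 : v l = 0 := by simp [hv, max_eq_right h]
      have hαle : αs ≤ lam * D l := by
        have := (div_le_iff₀ hDl).mp (by linarith : αs / D l ≤ lam)
        linarith
      have hwl := hw l
      rw [hv0]
      nlinarith [sq_nonneg (w l), mul_nonneg (hw l) hDl.le]
    · have hv1 : v l = (1 / 2) * (αs / D l - lam) := by
        simp [hv, max_eq_left h.le]
      have hα : 2 * v l * D l + lam * D l = αs := by
        rw [hv1]; field_simp; ring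
      nlinarith [sq_nonneg (w l - v l), mul_nonneg (sq_nonneg (w l - v l)) hDl.le]
  calc ∑ l, (v l ^ 2 + lam * v l) * D l
      = ∑ l, ((v l ^ 2 + lam * v l) * D l + αs * (w l - v l)) := by
        rw [Finset.sum_add_distrib, ← Finset.mul_sum]
        have : ∑ l, (w l - v l) = 0 := by
          rw [Finset.sum_sub_distrib, hsum, hroot]; ring
        rw [this]; ring
    _ ≤ ∑ l, ((w l) ^ 2 + lam * w l) * D l := Finset.sum_le_sum fun l _ => key l
end

section
/- Fix $w$ with all $w_l > 0$, $\lambda \ge 0$, $\gamma > 0$, and nonnegative affinities $\phi_{ij}$. The stationarity condition $\partial f / \partial \mu_{il} = 0$ for the objective $f(\mu) = \sum_{i,l} (w_l^2 + \lambda w_l)(x_{il}-\mu_{il})^2 + \gamma \sum_{i \ne j} \phi_{ij} \sum_l (\mu_{il}-\mu_{jl})^2$ is equivalent to $\mu_{il} = \frac{\gamma \sum_{j \ne i} (\phi_{ij} + \phi_{ji}) \mu_{jl} + (w_l^2 + \lambda w_l) x_{il}}{\gamma \sum_{j \ne i} (\phi_{ij} + \phi_{ji}) + w_l^2 + \lambda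 w_l}$. -/
/-- The stationarity condition `∂f/∂μ_{il} = 0` for the biconvex clustering objective in `μ`
is equivalent to the closed-form centroid update. -/
theorem stmt_7 {n p : ℕ} (x μ : Fin n → Fin p → ℝ) (w : Fin p → ℝ) (hw : ∀ l, 0 < w l)
    (lam : ℝ) (hlam : 0 ≤ lam) (γ : ℝ) (hγ : 0 < γ)
    (φ : Fin n → Fin n → ℝ) (hφ : ∀ i j, 0 ≤ φ i j) (i : Fin n) (l : Fin p) :
    (deriv (fun t : ℝ =>
        (∑ i', ∑ l', ((w l') ^ 2 + lam * w l') *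
            (x i' l' - Function.update μ i (Function.update (μ i) l t) i' l') ^ 2)
          + γ * ∑ i', ∑ j, (if i' ≠ j then
              φ i' j * ∑ l', (Function.update μ i (Function.update (μ i) l t) i' l'
                - Function.update μ i (Function.update (μ i) l t) j l') ^ 2 else 0))
        (μ i l) = 0)
    ↔ μ i l =
        (γ * (∑ j, if j ≠ i then (φ i j + φ j i) * μ j l else 0)
            + ((w l) ^ 2 + lam * w l) * x i l)
          / (γ * (∑ j, if j ≠ i then φ i j + φ j i else 0) + (w l) ^ 2 + lam * w l) := by
  classical
  have hwl := hw l
  have hcpos : (0:ℝ) < (w l) ^ 2 + lam * w l := by positivity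
  set m : ℝ := μ i l with hm
  -- derivative of the fidelity part
  have h1 : HasDerivAt (fun t : ℝ =>
      ∑ i', ∑ l', ((w l') ^ 2 + lam * w l') *
        (x i' l' - Function.update μ i (Function.update (μ i) l t) i' l') ^ 2)
      (2 * ((w l) ^ 2 + lam * w l) * (m - x i l)) m := by
    have hsum := HasDerivAt.fun_sum (u := Finset.univ) (x := m)
      (A := fun i' t => ∑ l', ((w l') ^ 2 + lam * w l') *
        (x i' l' - Function.update μ i (Function.update (μ i) l t) i' l') ^ 2)
      (A' := fun i' => if i' = i then 2 * ((w l) ^ 2 + lam * w l) * (m - x i l) else 0) ?_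
    · simpa using hsum
    · intro i' _
      by_cases hne : i' = i
      · rw [hne]
        simp only [if_pos rfl, Function.update_self]
        have hsum2 := HasDerivAt.fun_sum (u := Finset.univ) (x := m)
          (A := fun l' t => ((w l') ^ 2 + lam * w l') *
            (x i l' - Function.update (μ i) l t l') ^ 2)
          (A' := fun l' => if l' = l then 2 * ((w l) ^ 2 + lam * w l) * (m - x i l) else 0) ?_
        · simpa using hsum2
        · intro l' _
          by_cases hnel : l' = l
          · rw [hnel]
            simp only [if_pos rfl, Function.update_self]
            have h := (((hasDerivAt_id m).const_sub (x i l)).pow 2).const_mul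
              ((w l) ^ 2 + lam * w l)
            refine h.congr_deriv ?_
            push_cast [id_eq]
            ring
          · simp only [if_neg hnel, Function.update_of_ne hnel]
            exact hasDerivAt_const _ _
      · simp only [if_neg hne, Function.update_of_ne hne]
        exact hasDerivAt_const _ _
  -- derivative of the fusion part
  have h2 : HasDerivAt (fun t : ℝ =>
      ∑ i', ∑ j, (if i' ≠ j then
        φ i' j * ∑ l', (Function.update μ i (Function.update (μ i) l t) i' l'
          - Function.update μ i (Function.update (μ i) l t) j l') ^ 2 else 0))
      (∑ i', ∑ j, (if i' = i ∧ j ≠ i then φ i j * (2 * (m - μ j l))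
        else if j = i ∧ i' ≠ i then φ i' i * (2 * (m - μ i' l)) else 0)) m := by
    apply HasDerivAt.fun_sum (F := ℝ)
    intro i' _
    apply HasDerivAt.fun_sum (F := ℝ)
    intro j _
    by_cases hij : i' = j
    · have hA : ¬(i' = i ∧ j ≠ i) := fun h => h.2 (hij.symm.trans h.1)
      have hB : ¬(j = i ∧ i' ≠ i) := fun h => h.2 (hij.trans h.1)
      simp only [hA, hB, if_false, if_neg (not_not_intro hij)]
      exact hasDerivAt_const _ _
    · by_cases hi' : i' = i
      · have hji : j ≠ i := fun h => hij (hi'.trans h.symm)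
        have hIJ : i ≠ j := fun h => hij (hi'.trans h)
        have key : HasDerivAt
            (fun y : ℝ => φ i j * ∑ l', (Function.update (μ i) l y l' - μ j l') ^ 2)
            (φ i j * (2 * (m - μ j l))) m := by
          have hsum3 := HasDerivAt.fun_sum (u := Finset.univ) (x := m)
            (A := fun l' t => (Function.update (μ i) l t l' - μ j l') ^ 2)
            (A' := fun l' => if l' = l then 2 * (m - μ j l) else 0) ?_
          · convert hsum3.const_mul (φ i j) using 2
            · rfl
            · rfl
            simp
          · intro l' _
            by_cases hnel : l' = l
            · rw [hnel]
              simp only [if_pos rfl, Function.update_self]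
              have h := ((hasDerivAt_id m).sub_const (μ j l)).pow 2
              refine h.congr_deriv ?_
              push_cast [id_eq]
              ring
            · simp only [if_neg hnel, Function.update_of_ne hnel]
              exact hasDerivAt_const _ _
        convert key using 1
        · rfl
        · rfl
        · funext t
          simp [hi', hIJ, Function.update_of_ne hji]
        · simp [hi', hji]
      · by_cases hj : j = i
        · have key : HasDerivAt
              (fun y : ℝ => φ i' i * ∑ l', (μ i' l' - Function.update (μ i) l y l') ^ 2)
              (φ i' i * (2 * (m - μ i' l))) m := by
            have hsum3 := HasDerivAt.fun_sum (u := Finset.univ) (x := m)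
              (A := fun l' t => (μ i' l' - Function.update (μ i) l t l') ^ 2)
              (A' := fun l' => if l' = l then 2 * (m - μ i' l) else 0) ?_
            · convert hsum3.const_mul (φ i' i) using 2
              · rfl
              · rfl
              simp
            · intro l' _
              by_cases hnel : l' = l
              · rw [hnel]
                simp only [if_pos rfl, Function.update_self]
                have h := ((hasDerivAt_id m).const_sub (μ i' l)).pow 2
                refine h.congr_deriv ?_
                push_cast [id_eq]
                ring
              · simp only [if_neg hnel, Function.update_of_ne hnel]
                exact hasDerivAt_const _ _
          convert key using 1
          · rfl
          · rfl
          · funext t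
            simp [hj, hi', Function.update_of_ne hi']
          · simp [hj, hi']
        · have hA : ¬(i' = i ∧ j ≠ i) := fun h => hi' h.1
          have hB : ¬(j = i ∧ i' ≠ i) := fun h => hj h.1
          simp only [if_pos hij, hA, hB, if_false, Function.update_of_ne hi',
            Function.update_of_ne hj]
          exact hasDerivAt_const _ _
  have hF := h1.fun_add (h2.const_mul γ)
  rw [hF.deriv]
  -- simplify the double sum of fusion derivatives
  have hDsum : (∑ i', ∑ j, (if i' = i ∧ j ≠ i then φ i j * (2 * (m - μ j l))
      else if j = i ∧ i' ≠ i then φ i' i * (2 * (m - μ i' l)) else 0))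
      = 2 * ((∑ j, if j ≠ i then φ i j + φ j i else 0) * m
          - (∑ j, if j ≠ i then (φ i j + φ j i) * μ j l else 0)) := by
    have hsplit : ∀ i' j : Fin n, (if i' = i ∧ j ≠ i then φ i j * (2 * (m - μ j l))
        else if j = i ∧ i' ≠ i then φ i' i * (2 * (m - μ i' l)) else 0)
        = (if i' = i then (if j ≠ i then φ i j * (2 * (m - μ j l)) else 0) else 0)
          + (if j = i then (if i' ≠ i then φ i' i * (2 * (m - μ i' l)) else 0) else 0) := by
      intro i' j
      by_cases ha : i' = i <;> by_cases hb : j = i <;> simp [ha, hb]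
    have step1 : (∑ i', ∑ j, (if i' = i ∧ j ≠ i then φ i j * (2 * (m - μ j l))
        else if j = i ∧ i' ≠ i then φ i' i * (2 * (m - μ i' l)) else 0))
        = (∑ j, if j ≠ i then φ i j * (2 * (m - μ j l)) else 0)
          + (∑ j, if j ≠ i then φ j i * (2 * (m - μ j l)) else 0) := by
      simp only [hsplit, Finset.sum_add_distrib]
      congr 1
      · have hrow : ∀ i' : Fin n,
            (∑ j, if i' = i then (if j ≠ i then φ i j * (2 * (m - μ j l)) else 0) else 0)
            = if i' = i then (∑ j, if j ≠ i then φ i j * (2 * (m - μ j l)) else 0) else 0 := by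
          intro i'; split <;> simp
        rw [Finset.sum_congr rfl fun i' _ => hrow i']
        simp
      · refine Finset.sum_congr rfl fun i' _ => ?_
        simp
    rw [step1, ← Finset.sum_add_distrib, Finset.sum_mul, ← Finset.sum_sub_distrib,
      Finset.mul_sum]
    refine Finset.sum_congr rfl fun j _ => ?_
    by_cases hji : j ≠ i
    · simp only [if_pos hji]
      ring
    · simp [hji]
  rw [hDsum]
  have hSnn : (0:ℝ) ≤ ∑ j, if j ≠ i then φ i j + φ j i else 0 := by
    apply Finset.sum_nonneg
    intro j _
    split
    · have := hφ i j; have := hφ j i; linarith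
    · exact le_refl 0
  have hden : (0:ℝ) < γ * (∑ j, if j ≠ i then φ i j + φ j i else 0)
      + (w l) ^ 2 + lam * w l := by nlinarith
  rw [eq_div_iff (ne_of_gt hden)]
  constructor <;> intro h
  · linear_combination h / 2
  · linear_combination 2 * h
end
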